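/- In the example pair of mapper cosheaves where $F$ has two tails $x, z$ at level $\sigma_1$ merging at distance 3 (in the 2-thickening the components $[x]$ and $[z]$ satisfy $d_{S_{\sigma_1}^2}^F([x],[z]) = 3$), and $G$ has a single component $y$ at that level, every 1-assignment $(\phi,\psi)$ has loss $L_B(\phi,\psi) \geq 2$, hence the computed bound satisfies $1 + L_B(\phi,\psi) \geq 3$, while $d_I(F,G) = 2$. Thus the optimal bound for $n=1$ strictly exceeds the interleaving distance. -/

import Mathlib

variable {α : Type*} [Preorder α]

/-- The up-set of a subset of a poset. -/
def upSet (S : Set α) : Set α := {u | ∃ v ∈ S, v ≤ u}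

/-- The down-set of a subset of a poset. -/
def downSet (S : Set α) : Set α := {u | ∃ v ∈ S, u ≤ v}

/-- The `n`-fold Alexandrov thickening `S^n`. -/
def thicken (S : Set α) : ℕ → Set α
  | 0 => S
  | n + 1 => downSet (upSet (thicken S n))

lemma subset_downUp (S : Set α) : S ⊆ downSet (upSet S) :=
  fun u hu => ⟨u, ⟨u, hu, le_refl u⟩, le_refl u⟩

lemma self_subset_thicken (S : Set α) : ∀ n : ℕ, S ⊆ thicken S n
  | 0 => Set.Subset.rfl
  | n + 1 => (self_subset_thicken S n).trans (subset_downUp _)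

lemma thicken_le (S : Set α) {m n : ℕ} (h : m ≤ n) : thicken S m ⊆ thicken S n := by
  induction h with
  | refl => exact Set.Subset.rfl
  | step _ ih => exact ih.trans (subset_downUp _)

lemma thicken_subset {S T : Set α} (h : S ⊆ T) : ∀ n : ℕ, thicken S n ⊆ thicken T n := by
  intro n
  induction n with
  | zero => exact h
  | succ n ih =>
    rintro u ⟨v, ⟨w, hw, hwv⟩, huv⟩
    exact ⟨v, ⟨w, ih hw, hwv⟩, huv⟩

lemma thicken_thicken (S : Set α) (m : ℕ) :
    ∀ n : ℕ, thicken (thicken S m) n = thicken S (m + n)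
  | 0 => rfl
  | n + 1 => by
    show downSet (upSet (thicken (thicken S m) n)) = downSet (upSet (thicken S (m + n)))
    rw [thicken_thicken S m n]
/-- A `Set`-valued functor on the Alexandrov-open sets of the poset `α`
(the data of a mapper cosheaf). -/
structure MapperCosheaf (α : Type*) [Preorder α] where
  obj : Set α → Type*
  map : ∀ ⦃S T : Set α⦄, S ⊆ T → obj S → obj T
  map_id : ∀ (S : Set α) (a : obj S), map (Set.Subset.refl S) a = a
  map_comp : ∀ ⦃S T U : Set α⦄ (h₁ : S ⊆ T) (h₂ : T ⊆ U) (a : obj S),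
      map h₂ (map h₁ a) = map (h₁.trans h₂) a

/-- The distance `d_S^F(A,B)`: the least `k` with
`F[S ⊆ S^k](A) = F[S ⊆ S^k](B)`, or `∞` if none exists. -/
noncomputable def fdist (F : MapperCosheaf α) (S : Set α) (A B : F.obj S) : ℕ∞ :=
  sInf {x : ℕ∞ | ∃ k : ℕ, x = (k : ℕ∞) ∧
    F.map (self_subset_thicken S k) A = F.map (self_subset_thicken S k) B}

/-- An `n`-interleaving between two mapper cosheaves. -/
def IsInterleaving (F G : MapperCosheaf α) (n : ℕ) : Prop :=
  ∃ (φ : ∀ S : Set α, F.obj S → G.obj (thicken S n))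
    (ψ : ∀ S : Set α, G.obj S → F.obj (thicken S n)),
    (∀ ⦃S T : Set α⦄, downSet S = S → downSet T = T → ∀ (h : S ⊆ T) (a : F.obj S),
        G.map (thicken_subset h n) (φ S a) = φ T (F.map h a)) ∧
    (∀ ⦃S T : Set α⦄, downSet S = S → downSet T = T → ∀ (h : S ⊆ T) (a : G.obj S),
        F.map (thicken_subset h n) (ψ S a) = ψ T (G.map h a)) ∧
    (∀ S : Set α, downSet S = S → ∀ a : F.obj S,
        F.map (thicken_thicken S n n).subset (ψ (thicken S n) (φ S a)) =
          F.map (self_subset_thicken S (n + n)) a) ∧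
    (∀ S : Set α, downSet S = S → ∀ a : G.obj S,
        G.map (thicken_thicken S n n).subset (φ (thicken S n) (ψ S a)) =
          G.map (self_subset_thicken S (n + n)) a)

/-- The interleaving distance between mapper cosheaves. -/
noncomputable def interleavingDist (F G : MapperCosheaf α) : ℕ∞ :=
  sInf {x : ℕ∞ | ∃ n : ℕ, x = (n : ℕ∞) ∧ IsInterleaving F G n}
/-- Ceiling of half of an extended natural number. -/
noncomputable def ceilHalf (d : ℕ∞) : ℕ∞ := WithTop.map (fun k => (k + 1) / 2) d

/-- The loss `L_B(φ,ψ)` of an `n`-assignment: the supremum over all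
parallelogram and triangle diagram losses. -/
noncomputable def assignmentLoss (F G : MapperCosheaf α) (n : ℕ)
    (φ : ∀ S : Set α, F.obj S → G.obj (thicken S n))
    (ψ : ∀ S : Set α, G.obj S → F.obj (thicken S n)) : ℕ∞ :=
  sSup {x : ℕ∞ |
    (∃ S T : Set α, downSet S = S ∧ downSet T = T ∧ ∃ (h : S ⊆ T) (a : F.obj S),
      x = fdist G (thicken T n) (φ T (F.map h a)) (G.map (thicken_subset h n) (φ S a))) ∨
    (∃ S T : Set α, downSet S = S ∧ downSet T = T ∧ ∃ (h : S ⊆ T) (a : G.obj S),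
      x = fdist F (thicken T n) (ψ T (G.map h a)) (F.map (thicken_subset h n) (ψ S a))) ∨
    (∃ S : Set α, downSet S = S ∧ ∃ a : F.obj S,
      x = ceilHalf (fdist F (thicken S (n + n))
            (F.map (self_subset_thicken S (n + n)) a)
            (F.map (thicken_thicken S n n).subset (ψ (thicken S n) (φ S a))))) ∨
    (∃ S : Set α, downSet S = S ∧ ∃ a : G.obj S,
      x = ceilHalf (fdist G (thicken S (n + n))
            (G.map (self_subset_thicken S (n + n)) a)
            (G.map (thicken_thicken S n n).subset (φ (thicken S n) (ψ S a)))))}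
/-- The vertex cover element `U_{σ_i} = ((i-1)δ, (i+1)δ)`. -/
def Usig (δ : ℝ) (i : ℤ) : Set ℝ := Set.Ioo (((i : ℝ) - 1) * δ) (((i : ℝ) + 1) * δ)

/-- The edge cover element `U_{τ_i} = (iδ, (i+1)δ)`. -/
def Utau (δ : ℝ) (i : ℤ) : Set ℝ := Set.Ioo ((i : ℝ) * δ) (((i : ℝ) + 1) * δ)

/-- The cover `𝒰` of `ℝ`. -/
def Cover (δ : ℝ) : Set (Set ℝ) := Set.range (Usig δ) ∪ Set.range (Utau δ)

/-- The cover poset `𝒰`, ordered by set inclusion. -/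
abbrev CoverPoset (δ : ℝ) := {U : Set ℝ // U ∈ Cover δ}

/-- `U_{σ_i}` as an element of the cover poset. -/
def sigC (δ : ℝ) (i : ℤ) : CoverPoset δ := ⟨Usig δ i, Or.inl ⟨i, rfl⟩⟩

/-- `U_{τ_i}` as an element of the cover poset. -/
def tauC (δ : ℝ) (i : ℤ) : CoverPoset δ := ⟨Utau δ i, Or.inr ⟨i, rfl⟩⟩

/-- Geometric realization `|S| = ⋃_{U ∈ S} U`. -/
def geomReal {δ : ℝ} (S : Set (CoverPoset δ)) : Set ℝ := {x | ∃ U ∈ S, x ∈ (U : Set ℝ)}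

namespace MEx

open Set

/-! ### basic poset lemmas -/

lemma subset_downSet (S : Set α) : S ⊆ downSet S := fun u hu => ⟨u, hu, le_refl u⟩

lemma downSet_idem (S : Set α) : downSet (downSet S) = downSet S := by
  apply Set.Subset.antisymm
  · rintro u ⟨v, ⟨w, hw, hvw⟩, huv⟩
    exact ⟨w, hw, huv.trans hvw⟩
  · exact subset_downSet _

lemma thicken_downClosed (S : Set α) (n : ℕ) :
    downSet (thicken (downSet S) n) = thicken (downSet S) n := by
  cases n with
  | zero => exact downSet_idem S
  | succ n => exact downSet_idem _

lemma mem_downSet_of_le {S : Set α} {c d : α} (h : c ≤ d) (hd : d ∈ downSet S) :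
    c ∈ downSet S := by
  obtain ⟨v, hv, hdv⟩ := hd
  exact ⟨v, hv, h.trans hdv⟩

lemma mem_thicken_succ_of_le {S : Set α} {c d : α} {n : ℕ} (h : c ≤ d)
    (hd : d ∈ thicken S (n + 1)) : c ∈ thicken S (n + 1) :=
  mem_downSet_of_le h hd

lemma mem_upSet_of_le {S : Set α} {c d : α} (hc : c ∈ S) (h : c ≤ d) : d ∈ upSet S :=
  ⟨c, hc, h⟩

lemma upSet_subset_thicken_one (S : Set α) : upSet S ⊆ thicken S 1 :=
  subset_downSet _

/-! ### cover lemmas -/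

lemma sig_val (i : ℤ) : ((sigC 1 i : CoverPoset 1) : Set ℝ) = Set.Ioo ((i:ℝ)-1) ((i:ℝ)+1) := by
  simp [sigC, Usig]

lemma tau_val (i : ℤ) : ((tauC 1 i : CoverPoset 1) : Set ℝ) = Set.Ioo (i:ℝ) ((i:ℝ)+1) := by
  simp [tauC, Utau]

lemma cp_le_iff {c d : CoverPoset 1} : c ≤ d ↔ (c : Set ℝ) ⊆ (d : Set ℝ) := Iff.rfl

lemma tau_le_sig_left (i : ℤ) : tauC 1 i ≤ sigC 1 i := by
  rw [cp_le_iff, tau_val, sig_val]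
  exact Set.Ioo_subset_Ioo (by linarith) (le_refl _)

lemma tau_le_sig_right (i : ℤ) : tauC 1 i ≤ sigC 1 (i+1) := by
  rw [cp_le_iff, tau_val, sig_val]
  push_cast
  exact Set.Ioo_subset_Ioo (by linarith) (by linarith)

lemma sig_le_sig {i j : ℤ} (h : sigC 1 i ≤ sigC 1 j) : i = j := by
  rw [cp_le_iff, sig_val, sig_val, Set.Ioo_subset_Ioo_iff (by linarith)] at h
  obtain ⟨h1, h2⟩ := h
  have : (i:ℝ) = j := by linarith
  exact_mod_cast this

lemma tau_le_tau {i j : ℤ} (h : tauC 1 i ≤ tauC 1 j) : i = j := by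
  rw [cp_le_iff, tau_val, tau_val, Set.Ioo_subset_Ioo_iff (by linarith)] at h
  obtain ⟨h1, h2⟩ := h
  have : (i:ℝ) = j := by linarith
  exact_mod_cast this

lemma tau_inj {i j : ℤ} (h : tauC 1 i = tauC 1 j) : i = j := tau_le_tau (le_of_eq h)

lemma sig_le_tau {i j : ℤ} (h : sigC 1 i ≤ tauC 1 j) : False := by
  rw [cp_le_iff, sig_val, tau_val, Set.Ioo_subset_Ioo_iff (by linarith)] at h
  obtain ⟨h1, h2⟩ := h
  linarith

lemma tau_le_sig {i j : ℤ} (h : tauC 1 i ≤ sigC 1 j) : j = i ∨ j = i + 1 := by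
  rw [cp_le_iff, tau_val, sig_val, Set.Ioo_subset_Ioo_iff (by linarith)] at h
  obtain ⟨h1, h2⟩ := h
  have hji : (j:ℝ) ≤ i + 1 := by linarith
  have hij : (i:ℝ) ≤ j := by linarith
  have hji' : j ≤ i + 1 := by exact_mod_cast hji
  have hij' : i ≤ j := by exact_mod_cast hij
  omega

lemma cover_cases (c : CoverPoset 1) : (∃ i, c = sigC 1 i) ∨ (∃ i, c = tauC 1 i) := by
  obtain ⟨U, hU⟩ := c
  rcases hU with ⟨i, hi⟩ | ⟨i, hi⟩
  · exact Or.inl ⟨i, Subtype.ext hi.symm⟩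
  · exact Or.inr ⟨i, Subtype.ext hi.symm⟩

lemma le_sig_cases {c : CoverPoset 1} {i : ℤ} (h : c ≤ sigC 1 i) :
    c = sigC 1 i ∨ c = tauC 1 (i-1) ∨ c = tauC 1 i := by
  rcases cover_cases c with ⟨j, rfl⟩ | ⟨j, rfl⟩
  · exact Or.inl (by rw [sig_le_sig h])
  · rcases tau_le_sig h with h' | h'
    · exact Or.inr (Or.inr (by rw [h']))
    · exact Or.inr (Or.inl (by rw [h']; congr 1; ring))

lemma le_tau_cases {c : CoverPoset 1} {i : ℤ} (h : c ≤ tauC 1 i) : c = tauC 1 i := by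
  rcases cover_cases c with ⟨j, rfl⟩ | ⟨j, rfl⟩
  · exact absurd h (fun h => sig_le_tau h)
  · rw [tau_le_tau h]


/-! ### S0 and membership lemmas -/

abbrev S0 : Set (CoverPoset 1) := downSet {sigC 1 1}

lemma sig1_mem_S0 : sigC 1 1 ∈ S0 := ⟨sigC 1 1, rfl, le_refl _⟩

lemma mem_S0 {c : CoverPoset 1} (h : c ∈ S0) : c ≤ sigC 1 1 := by
  obtain ⟨v, hv, hcv⟩ := h
  cases hv
  exact hcv

lemma tau1_mem_S0 : tauC 1 1 ∈ S0 := ⟨sigC 1 1, rfl, tau_le_sig_left 1⟩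

/-- from a tau in S, the right corridor lies in `thicken S 2`. -/
lemma tau_corridor_up {S : Set (CoverPoset 1)} {i : ℤ} (hi : tauC 1 i ∈ S) :
    sigC 1 (i+1) ∈ thicken S 2 ∧ tauC 1 (i+1) ∈ thicken S 2 ∧
    sigC 1 (i+2) ∈ thicken S 2 ∧ tauC 1 (i+2) ∈ thicken S 2 := by
  have s1 : sigC 1 (i+1) ∈ thicken S 1 :=
    upSet_subset_thicken_one S (mem_upSet_of_le hi (tau_le_sig_right i))
  have t1 : tauC 1 (i+1) ∈ thicken S 1 :=
    mem_thicken_succ_of_le (tau_le_sig_left (i+1)) s1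
  have s2 : sigC 1 (i+2) ∈ thicken S 2 := by
    have h2 : tauC 1 (i+1) ≤ sigC 1 (i+2) := by
      have := tau_le_sig_right (i+1)
      rwa [show i+1+1 = i+2 by ring] at this
    exact subset_downSet _ (mem_upSet_of_le t1 h2)
  have t2 : tauC 1 (i+2) ∈ thicken S 2 :=
    mem_thicken_succ_of_le (tau_le_sig_left (i+2)) s2
  exact ⟨thicken_le S (by norm_num) s1, thicken_le S (by norm_num) t1, s2, t2⟩

/-- from a tau in S, the left corridor lies in `thicken S 2`. -/
lemma tau_corridor_down {S : Set (CoverPoset 1)} {i : ℤ} (hi : tauC 1 i ∈ S) :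
    sigC 1 i ∈ thicken S 2 ∧ tauC 1 (i-1) ∈ thicken S 2 ∧
    sigC 1 (i-1) ∈ thicken S 2 ∧ tauC 1 (i-2) ∈ thicken S 2 := by
  have s1 : sigC 1 i ∈ thicken S 1 :=
    upSet_subset_thicken_one S (mem_upSet_of_le hi (tau_le_sig_left i))
  have t1 : tauC 1 (i-1) ∈ thicken S 1 := by
    refine mem_thicken_succ_of_le ?_ s1
    have := tau_le_sig_right (i-1)
    rwa [show i-1+1 = i by ring] at this
  have s2 : sigC 1 (i-1) ∈ thicken S 2 :=
    subset_downSet _ (mem_upSet_of_le t1 (tau_le_sig_left (i-1)))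
  have t2 : tauC 1 (i-2) ∈ thicken S 2 := by
    refine mem_thicken_succ_of_le ?_ s2
    have := tau_le_sig_right (i-2)
    rwa [show i-2+1 = i-1 by ring] at this
  exact ⟨thicken_le S (by norm_num) s1, thicken_le S (by norm_num) t1, s2, t2⟩

lemma sig_step {S : Set (CoverPoset 1)} {i : ℤ} (hi : sigC 1 i ∈ S) :
    sigC 1 (i+1) ∈ thicken S 2 := by
  have t0 : tauC 1 i ∈ thicken S 1 := by
    refine mem_thicken_succ_of_le (tau_le_sig_left i) ?_
    exact upSet_subset_thicken_one S (mem_upSet_of_le hi (le_refl _))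
  exact subset_downSet _ (mem_upSet_of_le t0 (tau_le_sig_right i))

lemma sig_in_thicken_S0 : ∀ k : ℕ, sigC 1 (1 + k) ∈ thicken S0 k := by
  intro k
  induction k with
  | zero => simpa [thicken] using sig1_mem_S0
  | succ n ih =>
    have hd : tauC 1 (1 + n) ∈ thicken S0 n := by
      cases n with
      | zero => exact ⟨sigC 1 1, rfl, by simpa using tau_le_sig_left 1⟩
      | succ m =>
        exact mem_thicken_succ_of_le (tau_le_sig_left _) ih
    have : sigC 1 (1 + n + 1) ∈ upSet (thicken S0 n) :=
      mem_upSet_of_le hd (tau_le_sig_right _)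
    have he : sigC 1 (1 + ((n+1 : ℕ):ℤ)) = sigC 1 (1 + n + 1) := by
      push_cast; ring_nf
    rw [he]
    exact subset_downSet _ this

lemma sig6_mem : sigC 1 6 ∈ thicken S0 5 := by
  have := sig_in_thicken_S0 5
  norm_num at this
  exact this

/-- bound on thickenings of S0 -/
lemma thicken_S0_bound : ∀ k : ℕ, ∀ c ∈ thicken S0 k, (c : Set ℝ) ⊆ Set.Ioo (-(k:ℝ)) (2+k) := by
  intro k
  induction k with
  | zero =>
    intro c hc
    have h := mem_S0 hc
    rw [cp_le_iff, sig_val] at h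
    refine h.trans ?_
    norm_num
  | succ n ih =>
    rintro c ⟨c', ⟨c'', hc'', hc''le⟩, hcle⟩
    have hc'bound : (c' : Set ℝ) ⊆ Set.Ioo (-(n:ℝ)-1) (2+n+1) := by
      rcases cover_cases c' with ⟨i, rfl⟩ | ⟨i, rfl⟩
      · rcases le_sig_cases hc''le with rfl | rfl | rfl
        · refine (ih _ hc'').trans ?_
          exact Set.Ioo_subset_Ioo (by linarith) (by linarith)
        · have hb := ih _ hc''
          rw [tau_val, Set.Ioo_subset_Ioo_iff (by linarith)] at hb
          rw [sig_val]
          push_cast at hb ⊢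
          exact Set.Ioo_subset_Ioo (by linarith [hb.1]) (by linarith [hb.2])
        · have hb := ih _ hc''
          rw [tau_val, Set.Ioo_subset_Ioo_iff (by linarith)] at hb
          rw [sig_val]
          exact Set.Ioo_subset_Ioo (by linarith [hb.1]) (by linarith [hb.2])
      · rw [le_tau_cases hc''le] at hc''
        refine (ih _ hc'').trans ?_
        exact Set.Ioo_subset_Ioo (by linarith) (by linarith)
    refine Set.Subset.trans (cp_le_iff.mp hcle) ?_
    refine hc'bound.trans ?_
    push_cast
    exact Set.Ioo_subset_Ioo (by linarith) (by linarith)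


/-! ### the cosheaves -/

def tailF (c : CoverPoset 1) : Prop := ∃ i : ℤ, c = tauC 1 i ∧ 1 ≤ i ∧ i ≤ 5
def tailG (c : CoverPoset 1) : Prop := ∃ i : ℤ, c = tauC 1 i ∧ 3 ≤ i ∧ i ≤ 6
def glF (c : CoverPoset 1) : Prop := ((c : Set ℝ) ∩ Set.Ioi 6).Nonempty
def glG (c : CoverPoset 1) : Prop := ((c : Set ℝ) ∩ Set.Ioi 7).Nonempty

def lF (p : CoverPoset 1 × Bool) : Prop := p.2 = true ∧ tailF p.1
def lG (p : CoverPoset 1 × Bool) : Prop := p.2 = true ∧ tailG p.1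

def Rel (l : CoverPoset 1 × Bool → Prop) (gl : CoverPoset 1 → Prop)
    (S : Set (CoverPoset 1)) (v w : {p : CoverPoset 1 × Bool // p.1 ∈ S}) : Prop :=
  (v.1.1 ≤ w.1.1 ∨ w.1.1 ≤ v.1.1) ∧ ((l v.1 ↔ l w.1) ∨ ∃ c ∈ S, gl c)

def build (l : CoverPoset 1 × Bool → Prop) (gl : CoverPoset 1 → Prop) :
    MapperCosheaf (CoverPoset 1) where
  obj S := ULift (Quot (Rel l gl S))
  map {S T} h a := ULift.up (Quot.map (fun v => ⟨v.1, h v.2⟩)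
    (fun a b hab => ⟨hab.1, hab.2.imp id (fun ⟨c, hc, hg⟩ => ⟨c, h hc, hg⟩)⟩) a.down)
  map_id S a := by
    obtain ⟨a⟩ := a
    induction a using Quot.ind
    rfl
  map_comp := by
    intro S T U h₁ h₂ a
    obtain ⟨a⟩ := a
    induction a using Quot.ind
    rfl

def F : MapperCosheaf (CoverPoset 1) := build lF glF
def G : MapperCosheaf (CoverPoset 1) := build lG glG

lemma glF_of_glG {c : CoverPoset 1} (h : glG c) : glF c := by
  obtain ⟨x, hx, h7⟩ := h
  exact ⟨x, hx, lt_trans (by norm_num : (6:ℝ) < 7) (show (7:ℝ) < x from h7)⟩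

lemma glF_sig6 : glF (sigC 1 6) := by
  refine ⟨6.5, ?_, ?_⟩
  · rw [sig_val]; constructor <;> norm_num
  · norm_num

lemma not_glF_of_bound {c : CoverPoset 1} {k : ℕ} (hk : (k:ℝ) ≤ 4)
    (hb : (c : Set ℝ) ⊆ Set.Ioo (-(k:ℝ)) (2+k)) : ¬ glF c := by
  rintro ⟨x, hxc, hx6⟩
  have := hb hxc
  simp only [Set.mem_Ioo] at this
  simp only [Set.mem_Ioi] at hx6
  linarith [this.2]

lemma not_tailG_of_bound {c : CoverPoset 1} {k : ℕ} (hk : (k:ℝ) ≤ 1)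
    (hb : (c : Set ℝ) ⊆ Set.Ioo (-(k:ℝ)) (2+k)) : ¬ tailG c := by
  rintro ⟨i, rfl, h3, _⟩
  rw [tau_val] at hb
  rw [Set.Ioo_subset_Ioo_iff (by linarith)] at hb
  have : (3:ℝ) ≤ i := by exact_mod_cast h3
  linarith [hb.2]

/-- glue transfer : a glF element of S gives a glG element of thicken S 2. -/
lemma glG_transfer {S : Set (CoverPoset 1)} (h : ∃ c ∈ S, glF c) :
    ∃ c ∈ thicken S 2, glG c := by
  obtain ⟨c, hc, x, hxc, hx6⟩ := h
  simp only [Set.mem_Ioi] at hx6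
  rcases cover_cases c with ⟨i, rfl⟩ | ⟨i, rfl⟩
  · rw [sig_val] at hxc
    have hi : (6:ℝ) ≤ i := by
      have h5 : (5:ℝ) < i := by linarith [hxc.2]
      have : (5:ℤ) < i := by exact_mod_cast h5
      exact_mod_cast this
    refine ⟨sigC 1 (i+1), sig_step hc, (i:ℝ) + 1.5, ?_, ?_⟩
    · rw [sig_val]; push_cast; constructor <;> [linarith; linarith]
    · simp only [Set.mem_Ioi]; linarith
  · rw [tau_val] at hxc
    have hi : (6:ℝ) ≤ i := by
      have h5 : (5:ℝ) < i := by linarith [hxc.2]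
      have : (5:ℤ) < i := by exact_mod_cast h5
      exact_mod_cast this
    refine ⟨sigC 1 (i+1), ?_, (i:ℝ) + 1.5, ?_, ?_⟩
    · exact thicken_le S (by norm_num)
        (upSet_subset_thicken_one S (mem_upSet_of_le hc (tau_le_sig_right i)))
    · rw [sig_val]; push_cast; constructor <;> [linarith; linarith]
    · simp only [Set.mem_Ioi]; linarith

lemma glF_transfer {S : Set (CoverPoset 1)} (h : ∃ c ∈ S, glG c) :
    ∃ c ∈ thicken S 2, glF c := by
  obtain ⟨c, hc, hg⟩ := h
  exact ⟨c, self_subset_thicken S 2 hc, glF_of_glG hg⟩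

/-! ### the two classes of F over S0, singleton of G -/

lemma not_lF_false {c : CoverPoset 1} : ¬ lF (c, false) := fun h => Bool.noConfusion h.1
lemma not_lG_false {c : CoverPoset 1} : ¬ lG (c, false) := fun h => Bool.noConfusion h.1

def xv : {p : CoverPoset 1 × Bool // p.1 ∈ S0} := ⟨(tauC 1 1, true), tau1_mem_S0⟩
def zv : {p : CoverPoset 1 × Bool // p.1 ∈ S0} := ⟨(sigC 1 1, false), sig1_mem_S0⟩

def xx : F.obj S0 := ULift.up (Quot.mk _ xv)
def zz : F.obj S0 := ULift.up (Quot.mk _ zv)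

lemma lF_invariant {T : Set (CoverPoset 1)} (hng : ∀ c ∈ T, ¬ glF c)
    {a b : {p : CoverPoset 1 × Bool // p.1 ∈ T}}
    (h : Quot.mk (Rel lF glF T) a = Quot.mk (Rel lF glF T) b) : lF a.1 ↔ lF b.1 := by
  have := congrArg (Quot.lift (fun v : {p : CoverPoset 1 × Bool // p.1 ∈ T} => lF v.1)
    (fun v w hvw => propext (hvw.2.resolve_right
      (fun hg => by obtain ⟨c, hc, hgl⟩ := hg; exact hng c hc hgl)))) h
  exact Iff.of_eq this

lemma lG_invariant {T : Set (CoverPoset 1)} (hng : ∀ c ∈ T, ¬ glG c)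
    {a b : {p : CoverPoset 1 × Bool // p.1 ∈ T}}
    (h : Quot.mk (Rel lG glG T) a = Quot.mk (Rel lG glG T) b) : lG a.1 ↔ lG b.1 := by
  have := congrArg (Quot.lift (fun v : {p : CoverPoset 1 × Bool // p.1 ∈ T} => lG v.1)
    (fun v w hvw => propext (hvw.2.resolve_right
      (fun hg => by obtain ⟨c, hc, hgl⟩ := hg; exact hng c hc hgl)))) h
  exact Iff.of_eq this

lemma no_glF_S0 : ∀ c ∈ thicken S0 0, ¬ glF c := fun c hc =>
  not_glF_of_bound (k := 0) (by norm_num) (thicken_S0_bound 0 c hc)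

lemma no_glF_S04 : ∀ c ∈ thicken S0 4, ¬ glF c := fun c hc =>
  not_glF_of_bound (k := 4) (by norm_num) (thicken_S0_bound 4 c hc)

lemma lF_xv : lF xv.1 := ⟨rfl, 1, rfl, le_refl 1, by norm_num⟩

lemma x_ne_z : xx ≠ zz := by
  intro h
  have h' : Quot.mk (Rel lF glF S0) xv = Quot.mk (Rel lF glF S0) zv := congrArg ULift.down h
  have := (lF_invariant no_glF_S0 h').mp lF_xv
  exact not_lF_false this

lemma classes_S0 : ∀ a : F.obj S0, a = xx ∨ a = zz := by
  intro a
  obtain ⟨a⟩ := a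
  induction a using Quot.ind with
  | _ v =>
    obtain ⟨⟨c, b⟩, hc⟩ := v
    by_cases hl : lF (c, b)
    · left
      obtain ⟨hb, i, hci, h1, h5⟩ := hl
      have hci' : c = tauC 1 i := hci
      have hb' : b = true := hb
      have hle : c ≤ sigC 1 1 := mem_S0 hc
      rw [hci'] at hle
      have hi : i = 1 := by rcases tau_le_sig hle with h | h <;> omega
      refine congrArg ULift.up (congrArg (Quot.mk _) (Subtype.ext ?_))
      show (c, b) = (tauC 1 1, true)
      rw [hci', hi, hb']
    · right
      exact congrArg ULift.up
        (Quot.sound ⟨Or.inl (mem_S0 hc), Or.inl (iff_of_false hl not_lF_false)⟩)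

lemma G_single_thicken1 :
    ∀ a : G.obj (thicken S0 1),
      a = ULift.up (Quot.mk _ ⟨(sigC 1 1, false), self_subset_thicken S0 1 sig1_mem_S0⟩) := by
  intro a
  obtain ⟨a⟩ := a
  induction a using Quot.ind with
  | _ v =>
    obtain ⟨⟨c, b⟩, hc⟩ := v
    have hnt : ¬ lG (c, b) := fun h =>
      not_tailG_of_bound (k := 1) (by norm_num) (thicken_S0_bound 1 c hc) h.2
    obtain ⟨c', hcup, hle⟩ := hc
    obtain ⟨c'', hc'', hle'⟩ := hcup
    have m' : c' ∈ thicken S0 1 := subset_downSet _ ⟨c'', hc'', hle'⟩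
    have m'' : c'' ∈ thicken S0 1 := self_subset_thicken S0 1 hc''
    have step1 : Quot.mk (Rel lG glG (thicken S0 1)) ⟨(c, b), ⟨c', ⟨c'', hc'', hle'⟩, hle⟩⟩ =
        Quot.mk _ ⟨(c', false), m'⟩ :=
      Quot.sound ⟨Or.inl hle, Or.inl (iff_of_false hnt not_lG_false)⟩
    have step2 : Quot.mk (Rel lG glG (thicken S0 1)) ⟨(c', false), m'⟩ =
        Quot.mk _ ⟨(c'', false), m''⟩ :=
      Quot.sound ⟨Or.inr hle', Or.inl (iff_of_false not_lG_false not_lG_false)⟩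
    have step3 : Quot.mk (Rel lG glG (thicken S0 1)) ⟨(c'', false), m''⟩ =
        Quot.mk _ ⟨(sigC 1 1, false), self_subset_thicken S0 1 sig1_mem_S0⟩ :=
      Quot.sound ⟨Or.inl (mem_S0 hc''), Or.inl (iff_of_false not_lG_false not_lG_false)⟩
    exact congrArg ULift.up ((step1.trans step2).trans step3)

lemma not_lG_S0 {c : CoverPoset 1} (hc : c ∈ S0) (b : Bool) : ¬ lG (c, b) := by
  rintro ⟨hb, i, hci, h3, h6⟩
  have hci' : c = tauC 1 i := hci
  have hle : c ≤ sigC 1 1 := mem_S0 hc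
  rw [hci'] at hle
  rcases tau_le_sig hle with h | h <;> omega

lemma G_single_S0 :
    ∀ a : G.obj S0, a = ULift.up (Quot.mk (Rel lG glG S0) ⟨(sigC 1 1, false), sig1_mem_S0⟩) := by
  intro a
  obtain ⟨a⟩ := a
  induction a using Quot.ind with
  | _ v =>
    obtain ⟨⟨c, b⟩, hc⟩ := v
    exact congrArg ULift.up (Quot.sound ⟨Or.inl (mem_S0 hc),
      Or.inl (iff_of_false (not_lG_S0 hc b) not_lG_false)⟩)

/-! ### the fdist computation -/

lemma map_lift {β : Type*} [Preorder β] {FF : MapperCosheaf β} {T : Set β} {A B : FF.obj T}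
    {k k' : ℕ} (h : k ≤ k')
    (he : FF.map (self_subset_thicken T k) A = FF.map (self_subset_thicken T k) B) :
    FF.map (self_subset_thicken T k') A = FF.map (self_subset_thicken T k') B := by
  calc FF.map (self_subset_thicken T k') A
      = FF.map (thicken_le T h) (FF.map (self_subset_thicken T k) A) :=
        (FF.map_comp _ _ _).symm
    _ = FF.map (thicken_le T h) (FF.map (self_subset_thicken T k) B) := by rw [he]
    _ = FF.map (self_subset_thicken T k') B := FF.map_comp _ _ _

def T2 : Set (CoverPoset 1) := thicken S0 2

def ix : F.obj T2 := F.map (self_subset_thicken S0 2) xx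
def iz : F.obj T2 := F.map (self_subset_thicken S0 2) zz

lemma eq_at_3 : F.map (self_subset_thicken T2 3) ix = F.map (self_subset_thicken T2 3) iz := by
  have m6 : sigC 1 6 ∈ thicken T2 3 := by
    show sigC 1 6 ∈ thicken (thicken S0 2) 3
    rw [thicken_thicken]
    exact sig6_mem
  exact congrArg ULift.up
    (Quot.sound ⟨Or.inl (tau_le_sig_left 1), Or.inr ⟨sigC 1 6, m6, glF_sig6⟩⟩)

lemma no_glF_T22 : ∀ c ∈ thicken T2 2, ¬ glF c := by
  intro c hc
  have : c ∈ thicken S0 4 := by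
    have e : thicken (thicken S0 2) 2 = thicken S0 4 := thicken_thicken S0 2 2
    rw [← e]
    exact hc
  exact no_glF_S04 c this

lemma neq_at_2 : F.map (self_subset_thicken T2 2) ix ≠ F.map (self_subset_thicken T2 2) iz := by
  intro h
  have h' : Quot.mk (Rel lF glF (thicken T2 2))
        ⟨(tauC 1 1, true), self_subset_thicken T2 2 (self_subset_thicken S0 2 tau1_mem_S0)⟩ =
      Quot.mk (Rel lF glF (thicken T2 2))
        ⟨(sigC 1 1, false), self_subset_thicken T2 2 (self_subset_thicken S0 2 sig1_mem_S0)⟩ :=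
    congrArg ULift.down h
  have := (lF_invariant no_glF_T22 h').mp lF_xv
  exact not_lF_false this

lemma fdist_xz : fdist F T2 ix iz = 3 := by
  apply le_antisymm
  · apply sInf_le
    exact ⟨3, by norm_num, eq_at_3⟩
  · refine le_sInf ?_
    rintro b ⟨k, rfl, hk⟩
    have : ¬ ((k : ℕ∞) < 3) := by
      intro hlt
      have hk3 : k < 3 := by exact_mod_cast hlt
      exact neq_at_2 (map_lift (by omega : k ≤ 2) hk)
    exact not_lt.mp this

/-! ### lower bound for the loss of any 1-assignment -/

lemma ceilHalf_lt_two {d : ℕ∞} (h : ceilHalf d < 2) : d < 3 := by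
  induction d using WithTop.recTopCoe with
  | top => unfold ceilHalf at h; rw [WithTop.map_top] at h; exact absurd h (not_lt.mpr le_top)
  | coe k =>
    unfold ceilHalf at h; rw [WithTop.map_coe] at h
    have h2 : (((k + 1) / 2 : ℕ) : ℕ∞) < 2 := h
    have h3 : (k + 1) / 2 < 2 := by exact_mod_cast h2
    show ((k : ℕ) : ℕ∞) < 3
    exact_mod_cast (by omega : k < 3)

lemma fdist_lt3 {T : Set (CoverPoset 1)} {A B : F.obj T} (h : fdist F T A B < 3) :
    F.map (self_subset_thicken T 2) A = F.map (self_subset_thicken T 2) B := by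
  obtain ⟨b, hb, hlt⟩ := sInf_lt_iff.mp h
  obtain ⟨k, rfl, hk⟩ := hb
  have hk3 : k < 3 := by exact_mod_cast hlt
  exact map_lift (by omega : k ≤ 2) hk

lemma loss_ge (φ : ∀ S : Set (CoverPoset 1), F.obj S → G.obj (thicken S 1))
    (ψ : ∀ S : Set (CoverPoset 1), G.obj S → F.obj (thicken S 1)) :
    (2 : ℕ∞) ≤ assignmentLoss F G 1 φ ψ := by
  have hφ : φ S0 xx = φ S0 zz :=
    (G_single_thicken1 (φ S0 xx)).trans (G_single_thicken1 (φ S0 zz)).symm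
  have wv : F.obj T2 := F.map (thicken_thicken S0 1 1).subset (ψ (thicken S0 1) (φ S0 xx))
  have hor : (2:ℕ∞) ≤ ceilHalf (fdist F T2 ix
        (F.map (thicken_thicken S0 1 1).subset (ψ (thicken S0 1) (φ S0 xx)))) ∨
      (2:ℕ∞) ≤ ceilHalf (fdist F T2 iz
        (F.map (thicken_thicken S0 1 1).subset (ψ (thicken S0 1) (φ S0 zz)))) := by
    by_contra hc
    push_neg at hc
    have h1 := fdist_lt3 (ceilHalf_lt_two hc.1)
    have h2 := fdist_lt3 (ceilHalf_lt_two hc.2)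
    rw [← hφ] at h2
    exact neq_at_2 (h1.trans h2.symm)
  rcases hor with h | h
  · refine le_trans h (le_sSup ?_)
    exact Or.inr (Or.inr (Or.inl ⟨S0, downSet_idem _, xx, rfl⟩))
  · refine le_trans h (le_sSup ?_)
    exact Or.inr (Or.inr (Or.inl ⟨S0, downSet_idem _, zz, rfl⟩))

/-! ### the 2-interleaving -/

open Classical in
noncomputable def phi0 (p : CoverPoset 1 × Bool) : CoverPoset 1 × Bool :=
  if h : lF p then (tauC 1 (h.2.choose + 2), true) else (p.1, false)

open Classical in
noncomputable def psi0 (p : CoverPoset 1 × Bool) : CoverPoset 1 × Bool :=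
  if h : lG p then (tauC 1 (h.2.choose - 2), true) else (p.1, false)

lemma phi0_neg {p : CoverPoset 1 × Bool} (h : ¬ lF p) : phi0 p = (p.1, false) := dif_neg h
lemma psi0_neg {p : CoverPoset 1 × Bool} (h : ¬ lG p) : psi0 p = (p.1, false) := dif_neg h

lemma phi0_pos {p : CoverPoset 1 × Bool} (h : lF p) :
    ∃ i : ℤ, p = (tauC 1 i, true) ∧ 1 ≤ i ∧ i ≤ 5 ∧ phi0 p = (tauC 1 (i+2), true) := by
  refine ⟨h.2.choose, ?_, h.2.choose_spec.2.1, h.2.choose_spec.2.2, ?_⟩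
  · exact Prod.ext h.2.choose_spec.1 h.1
  · rw [phi0, dif_pos h]

lemma psi0_pos {p : CoverPoset 1 × Bool} (h : lG p) :
    ∃ j : ℤ, p = (tauC 1 j, true) ∧ 3 ≤ j ∧ j ≤ 6 ∧ psi0 p = (tauC 1 (j-2), true) := by
  refine ⟨h.2.choose, ?_, h.2.choose_spec.2.1, h.2.choose_spec.2.2, ?_⟩
  · exact Prod.ext h.2.choose_spec.1 h.1
  · rw [psi0, dif_pos h]

lemma lF_tau {i : ℤ} (h1 : 1 ≤ i) (h5 : i ≤ 5) : lF (tauC 1 i, true) := ⟨rfl, i, rfl, h1, h5⟩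
lemma lG_tau {i : ℤ} (h3 : 3 ≤ i) (h6 : i ≤ 6) : lG (tauC 1 i, true) := ⟨rfl, i, rfl, h3, h6⟩

lemma phi_mem {S : Set (CoverPoset 1)} {p : CoverPoset 1 × Bool} (hp : p.1 ∈ S) :
    (phi0 p).1 ∈ thicken S 2 := by
  by_cases h : lF p
  · obtain ⟨i, hpe, h1, h5, hφ⟩ := phi0_pos h
    rw [hφ]
    have hm : tauC 1 i ∈ S := by rw [hpe] at hp; exact hp
    exact (tau_corridor_up hm).2.2.2
  · rw [phi0_neg h]; exact self_subset_thicken S 2 hp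

lemma psi_mem {S : Set (CoverPoset 1)} {p : CoverPoset 1 × Bool} (hp : p.1 ∈ S) :
    (psi0 p).1 ∈ thicken S 2 := by
  by_cases h : lG p
  · obtain ⟨j, hpe, h3, h6, hψ⟩ := psi0_pos h
    rw [hψ]
    have hm : tauC 1 j ∈ S := by rw [hpe] at hp; exact hp
    exact (tau_corridor_down hm).2.2.2
  · rw [psi0_neg h]; exact self_subset_thicken S 2 hp

lemma chain_up {l : CoverPoset 1 × Bool → Prop} {gl : CoverPoset 1 → Prop}
    {T : Set (CoverPoset 1)} (gw : ∃ c ∈ T, gl c) {i : ℤ} {b b' : Bool}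
    (h0 : tauC 1 i ∈ T) (h1 : sigC 1 (i+1) ∈ T) (h2 : tauC 1 (i+1) ∈ T)
    (h3 : sigC 1 (i+2) ∈ T) (h4 : tauC 1 (i+2) ∈ T) :
    Quot.mk (Rel l gl T) ⟨(tauC 1 (i+2), b), h4⟩ = Quot.mk (Rel l gl T) ⟨(tauC 1 i, b'), h0⟩ := by
  have l1 : tauC 1 (i+1) ≤ sigC 1 (i+2) := by
    have := tau_le_sig_right (i+1); rwa [show i+1+1 = i+2 by ring] at this
  have e1 : Quot.mk (Rel l gl T) ⟨(tauC 1 (i+2), b), h4⟩ =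
      Quot.mk (Rel l gl T) ⟨(sigC 1 (i+2), b'), h3⟩ :=
    Quot.sound ⟨Or.inl (tau_le_sig_left (i+2)), Or.inr gw⟩
  have e2 : Quot.mk (Rel l gl T) ⟨(sigC 1 (i+2), b'), h3⟩ =
      Quot.mk (Rel l gl T) ⟨(tauC 1 (i+1), b'), h2⟩ :=
    Quot.sound ⟨Or.inr l1, Or.inr gw⟩
  have e3 : Quot.mk (Rel l gl T) ⟨(tauC 1 (i+1), b'), h2⟩ =
      Quot.mk (Rel l gl T) ⟨(sigC 1 (i+1), b'), h1⟩ :=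
    Quot.sound ⟨Or.inl (tau_le_sig_left (i+1)), Or.inr gw⟩
  have e4 : Quot.mk (Rel l gl T) ⟨(sigC 1 (i+1), b'), h1⟩ =
      Quot.mk (Rel l gl T) ⟨(tauC 1 i, b'), h0⟩ :=
    Quot.sound ⟨Or.inr (tau_le_sig_right i), Or.inr gw⟩
  exact ((e1.trans e2).trans e3).trans e4

lemma chain_down {l : CoverPoset 1 × Bool → Prop} {gl : CoverPoset 1 → Prop}
    {T : Set (CoverPoset 1)} (gw : ∃ c ∈ T, gl c) {i : ℤ} {b b' : Bool}
    (h0 : tauC 1 i ∈ T) (h1 : sigC 1 i ∈ T) (h2 : tauC 1 (i-1) ∈ T)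
    (h3 : sigC 1 (i-1) ∈ T) (h4 : tauC 1 (i-2) ∈ T) :
    Quot.mk (Rel l gl T) ⟨(tauC 1 (i-2), b), h4⟩ = Quot.mk (Rel l gl T) ⟨(tauC 1 i, b'), h0⟩ := by
  have l1 : tauC 1 (i-2) ≤ sigC 1 (i-1) := by
    have := tau_le_sig_right (i-2); rwa [show i-2+1 = i-1 by ring] at this
  have l2 : tauC 1 (i-1) ≤ sigC 1 i := by
    have := tau_le_sig_right (i-1); rwa [show i-1+1 = i by ring] at this
  have e1 : Quot.mk (Rel l gl T) ⟨(tauC 1 (i-2), b), h4⟩ =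
      Quot.mk (Rel l gl T) ⟨(sigC 1 (i-1), b'), h3⟩ :=
    Quot.sound ⟨Or.inl l1, Or.inr gw⟩
  have e2 : Quot.mk (Rel l gl T) ⟨(sigC 1 (i-1), b'), h3⟩ =
      Quot.mk (Rel l gl T) ⟨(tauC 1 (i-1), b'), h2⟩ :=
    Quot.sound ⟨Or.inr (tau_le_sig_left (i-1)), Or.inr gw⟩
  have e3 : Quot.mk (Rel l gl T) ⟨(tauC 1 (i-1), b'), h2⟩ =
      Quot.mk (Rel l gl T) ⟨(sigC 1 i, b'), h1⟩ :=
    Quot.sound ⟨Or.inl l2, Or.inr gw⟩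
  have e4 : Quot.mk (Rel l gl T) ⟨(sigC 1 i, b'), h1⟩ =
      Quot.mk (Rel l gl T) ⟨(tauC 1 i, b'), h0⟩ :=
    Quot.sound ⟨Or.inr (tau_le_sig_left i), Or.inr gw⟩
  exact ((e1.trans e2).trans e3).trans e4

lemma phi_sound {S : Set (CoverPoset 1)} (v w : {p : CoverPoset 1 × Bool // p.1 ∈ S})
    (h : Rel lF glF S v w) :
    Quot.mk (Rel lG glG (thicken S 2)) ⟨phi0 v.1, phi_mem v.2⟩ =
    Quot.mk (Rel lG glG (thicken S 2)) ⟨phi0 w.1, phi_mem w.2⟩ := by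
  obtain ⟨hcmp, hrest⟩ := h
  rcases hrest with hiff | hglue
  · by_cases hv : lF v.1
    · have hw : lF w.1 := hiff.mp hv
      obtain ⟨i, hvi, _, _, _⟩ := phi0_pos hv
      obtain ⟨j, hwj, _, _, _⟩ := phi0_pos hw
      have hij : i = j := by
        rcases hcmp with hc | hc
        · rw [hvi, hwj] at hc; exact tau_le_tau hc
        · rw [hvi, hwj] at hc; exact (tau_le_tau hc).symm
      have hvw : v.1 = w.1 := by rw [hvi, hwj, hij]
      exact congrArg _ (Subtype.ext (congrArg phi0 hvw))
    · have hw : ¬ lF w.1 := fun hw => hv (hiff.mpr hw)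
      have e1 : Quot.mk (Rel lG glG (thicken S 2)) ⟨phi0 v.1, phi_mem v.2⟩ =
          Quot.mk _ ⟨(v.1.1, false), self_subset_thicken S 2 v.2⟩ :=
        congrArg _ (Subtype.ext (phi0_neg hv))
      have e2 : Quot.mk (Rel lG glG (thicken S 2)) ⟨phi0 w.1, phi_mem w.2⟩ =
          Quot.mk _ ⟨(w.1.1, false), self_subset_thicken S 2 w.2⟩ :=
        congrArg _ (Subtype.ext (phi0_neg hw))
      have em : Quot.mk (Rel lG glG (thicken S 2)) ⟨(v.1.1, false), self_subset_thicken S 2 v.2⟩ =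
          Quot.mk _ ⟨(w.1.1, false), self_subset_thicken S 2 w.2⟩ :=
        Quot.sound ⟨hcmp, Or.inl (iff_of_false not_lG_false not_lG_false)⟩
      exact e1.trans (em.trans e2.symm)
  · have gw : ∃ c ∈ thicken S 2, glG c := glG_transfer hglue
    have key : ∀ (u : {p : CoverPoset 1 × Bool // p.1 ∈ S}),
        Quot.mk (Rel lG glG (thicken S 2)) ⟨phi0 u.1, phi_mem u.2⟩ =
        Quot.mk _ ⟨(u.1.1, false), self_subset_thicken S 2 u.2⟩ := by
      intro u
      by_cases hu : lF u.1
      · obtain ⟨i, hui, h1, h5, hφ⟩ := phi0_pos hu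
        have hmem : tauC 1 i ∈ S := by have h' := u.2; rw [hui] at h'; exact h'
        obtain ⟨m1, m2, m3, m4⟩ := tau_corridor_up hmem
        have e1 : Quot.mk (Rel lG glG (thicken S 2)) ⟨phi0 u.1, phi_mem u.2⟩ =
            Quot.mk _ ⟨(tauC 1 (i+2), true), m4⟩ := congrArg _ (Subtype.ext hφ)
        have e2 := chain_up (l := lG) (gl := glG) gw (b := true) (b' := false)
          (self_subset_thicken S 2 hmem) m1 m2 m3 m4
        have e3 : Quot.mk (Rel lG glG (thicken S 2))
              ⟨(tauC 1 i, false), self_subset_thicken S 2 hmem⟩ =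
            Quot.mk _ ⟨(u.1.1, false), self_subset_thicken S 2 u.2⟩ :=
          congrArg _ (Subtype.ext (Prod.ext (congrArg Prod.fst hui).symm rfl))
        exact e1.trans (e2.trans e3)
      · exact congrArg _ (Subtype.ext (phi0_neg hu))
    have em : Quot.mk (Rel lG glG (thicken S 2)) ⟨(v.1.1, false), self_subset_thicken S 2 v.2⟩ =
        Quot.mk _ ⟨(w.1.1, false), self_subset_thicken S 2 w.2⟩ :=
      Quot.sound ⟨hcmp, Or.inr gw⟩
    exact (key v).trans (em.trans (key w).symm)

lemma psi_sound {S : Set (CoverPoset 1)} (v w : {p : CoverPoset 1 × Bool // p.1 ∈ S})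
    (h : Rel lG glG S v w) :
    Quot.mk (Rel lF glF (thicken S 2)) ⟨psi0 v.1, psi_mem v.2⟩ =
    Quot.mk (Rel lF glF (thicken S 2)) ⟨psi0 w.1, psi_mem w.2⟩ := by
  obtain ⟨hcmp, hrest⟩ := h
  rcases hrest with hiff | hglue
  · by_cases hv : lG v.1
    · have hw : lG w.1 := hiff.mp hv
      obtain ⟨i, hvi, _, _, _⟩ := psi0_pos hv
      obtain ⟨j, hwj, _, _, _⟩ := psi0_pos hw
      have hij : i = j := by
        rcases hcmp with hc | hc
        · rw [hvi, hwj] at hc; exact tau_le_tau hc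
        · rw [hvi, hwj] at hc; exact (tau_le_tau hc).symm
      have hvw : v.1 = w.1 := by rw [hvi, hwj, hij]
      exact congrArg _ (Subtype.ext (congrArg psi0 hvw))
    · have hw : ¬ lG w.1 := fun hw => hv (hiff.mpr hw)
      have e1 : Quot.mk (Rel lF glF (thicken S 2)) ⟨psi0 v.1, psi_mem v.2⟩ =
          Quot.mk _ ⟨(v.1.1, false), self_subset_thicken S 2 v.2⟩ :=
        congrArg _ (Subtype.ext (psi0_neg hv))
      have e2 : Quot.mk (Rel lF glF (thicken S 2)) ⟨psi0 w.1, psi_mem w.2⟩ =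
          Quot.mk _ ⟨(w.1.1, false), self_subset_thicken S 2 w.2⟩ :=
        congrArg _ (Subtype.ext (psi0_neg hw))
      have em : Quot.mk (Rel lF glF (thicken S 2)) ⟨(v.1.1, false), self_subset_thicken S 2 v.2⟩ =
          Quot.mk _ ⟨(w.1.1, false), self_subset_thicken S 2 w.2⟩ :=
        Quot.sound ⟨hcmp, Or.inl (iff_of_false not_lF_false not_lF_false)⟩
      exact e1.trans (em.trans e2.symm)
  · have gw : ∃ c ∈ thicken S 2, glF c := glF_transfer hglue
    have key : ∀ (u : {p : CoverPoset 1 × Bool // p.1 ∈ S}),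
        Quot.mk (Rel lF glF (thicken S 2)) ⟨psi0 u.1, psi_mem u.2⟩ =
        Quot.mk _ ⟨(u.1.1, false), self_subset_thicken S 2 u.2⟩ := by
      intro u
      by_cases hu : lG u.1
      · obtain ⟨j, huj, h3, h6, hψ⟩ := psi0_pos hu
        have hmem : tauC 1 j ∈ S := by have h' := u.2; rw [huj] at h'; exact h'
        obtain ⟨m1, m2, m3, m4⟩ := tau_corridor_down hmem
        have e1 : Quot.mk (Rel lF glF (thicken S 2)) ⟨psi0 u.1, psi_mem u.2⟩ =
            Quot.mk _ ⟨(tauC 1 (j-2), true), m4⟩ := congrArg _ (Subtype.ext hψ)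
        have e2 := chain_down (l := lF) (gl := glF) gw (b := true) (b' := false)
          (self_subset_thicken S 2 hmem) m1 m2 m3 m4
        have e3 : Quot.mk (Rel lF glF (thicken S 2))
              ⟨(tauC 1 j, false), self_subset_thicken S 2 hmem⟩ =
            Quot.mk _ ⟨(u.1.1, false), self_subset_thicken S 2 u.2⟩ :=
          congrArg _ (Subtype.ext (Prod.ext (congrArg Prod.fst huj).symm rfl))
        exact e1.trans (e2.trans e3)
      · exact congrArg _ (Subtype.ext (psi0_neg hu))
    have em : Quot.mk (Rel lF glF (thicken S 2)) ⟨(v.1.1, false), self_subset_thicken S 2 v.2⟩ =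
        Quot.mk _ ⟨(w.1.1, false), self_subset_thicken S 2 w.2⟩ :=
      Quot.sound ⟨hcmp, Or.inr gw⟩
    exact (key v).trans (em.trans (key w).symm)

noncomputable def Phi : ∀ S : Set (CoverPoset 1), F.obj S → G.obj (thicken S 2) :=
  fun S a => ULift.up
    (Quot.lift (fun v => Quot.mk (Rel lG glG (thicken S 2)) ⟨phi0 v.1, phi_mem v.2⟩)
      (fun a b hab => phi_sound a b hab) a.down)

noncomputable def Psi : ∀ S : Set (CoverPoset 1), G.obj S → F.obj (thicken S 2) :=
  fun S a => ULift.up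
    (Quot.lift (fun v => Quot.mk (Rel lF glF (thicken S 2)) ⟨psi0 v.1, psi_mem v.2⟩)
      (fun a b hab => psi_sound a b hab) a.down)

lemma not_lG_of_phi0_tail {i : ℤ} (hi5 : i = 5) : ¬ lG (tauC 1 (i+2), true) := by
  rintro ⟨_, j, hj, h3, h6⟩
  have := tau_inj hj
  omega

lemma interleave2 : IsInterleaving F G 2 := by
  refine ⟨Phi, Psi, ?_, ?_, ?_, ?_⟩
  · intro S T _ _ h a
    obtain ⟨a⟩ := a
    induction a using Quot.ind
    rfl
  · intro S T _ _ h a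
    obtain ⟨a⟩ := a
    induction a using Quot.ind
    rfl
  · -- F triangle
    intro S _ a
    obtain ⟨a⟩ := a
    induction a using Quot.ind with
    | _ v =>
      by_cases hv : lF v.1
      · obtain ⟨i, hvi, h1, h5, hφ⟩ := phi0_pos hv
        by_cases hi4 : i ≤ 4
        · have hlG : lG (phi0 v.1) := by rw [hφ]; exact lG_tau (by omega) (by omega)
          obtain ⟨j, hj, _, _, hψ⟩ := psi0_pos hlG
          have hji : i + 2 = j := tau_inj (congrArg Prod.fst (hφ.symm.trans hj))
          have heq : psi0 (phi0 v.1) = v.1 := by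
            rw [hψ, ← hji, show i + 2 - 2 = i by ring, ← hvi]
          exact congrArg ULift.up (congrArg (Quot.mk _) (Subtype.ext heq))
        · have hi5 : i = 5 := by omega
          have hnlG : ¬ lG (phi0 v.1) := by rw [hφ]; exact not_lG_of_phi0_tail hi5
          have hψ : psi0 (phi0 v.1) = (tauC 1 (i+2), false) := by
            rw [psi0_neg hnlG, hφ]
          have hmem : tauC 1 i ∈ S := by have h' := v.2; rw [hvi] at h'; exact h'
          obtain ⟨m1, m2, m3, m4⟩ := tau_corridor_up hmem
          have M0 : tauC 1 i ∈ thicken S (2+2) := self_subset_thicken S (2+2) hmem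
          have M1 : sigC 1 (i+1) ∈ thicken S (2+2) := thicken_le S (by norm_num) m1
          have M2 : tauC 1 (i+1) ∈ thicken S (2+2) := thicken_le S (by norm_num) m2
          have M3 : sigC 1 (i+2) ∈ thicken S (2+2) := thicken_le S (by norm_num) m3
          have M4 : tauC 1 (i+2) ∈ thicken S (2+2) := thicken_le S (by norm_num) m4
          have gw : ∃ c ∈ thicken S (2+2), glF c :=
            ⟨sigC 1 (i+1), M1, by rw [hi5]; exact glF_sig6⟩
          have e1 : Quot.mk (Rel lF glF (thicken S (2+2)))
                ⟨psi0 (phi0 v.1), psi_mem (phi_mem v.2)⟩ =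
              Quot.mk _ ⟨(tauC 1 (i+2), false), M4⟩ := congrArg _ (Subtype.ext hψ)
          have e2 := chain_up (l := lF) (gl := glF) gw (b := false) (b' := true) M0 M1 M2 M3 M4
          have e3 : Quot.mk (Rel lF glF (thicken S (2+2))) ⟨(tauC 1 i, true), M0⟩ =
              Quot.mk _ ⟨v.1, self_subset_thicken S (2+2) v.2⟩ :=
            congrArg _ (Subtype.ext (by rw [hvi]))
          exact congrArg ULift.up (e1.trans (e2.trans e3))
      · have hφ := phi0_neg hv
        have hnlG : ¬ lG (phi0 v.1) := by rw [hφ]; exact not_lG_false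
        have hψ : psi0 (phi0 v.1) = (v.1.1, false) := by rw [psi0_neg hnlG, hφ]
        have e1 : Quot.mk (Rel lF glF (thicken S (2+2)))
              ⟨psi0 (phi0 v.1), psi_mem (phi_mem v.2)⟩ =
            Quot.mk _ ⟨(v.1.1, false), self_subset_thicken S (2+2) v.2⟩ :=
          congrArg _ (Subtype.ext hψ)
        have e2 : Quot.mk (Rel lF glF (thicken S (2+2)))
              ⟨(v.1.1, false), self_subset_thicken S (2+2) v.2⟩ =
            Quot.mk _ ⟨v.1, self_subset_thicken S (2+2) v.2⟩ :=
          Quot.sound ⟨Or.inl (le_refl _), Or.inl (iff_of_false not_lF_false hv)⟩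
        exact congrArg ULift.up (e1.trans e2)
  · -- G triangle
    intro S _ a
    obtain ⟨a⟩ := a
    induction a using Quot.ind with
    | _ v =>
      by_cases hv : lG v.1
      · obtain ⟨j, hvj, h3, h6, hψ⟩ := psi0_pos hv
        have hlF : lF (psi0 v.1) := by rw [hψ]; exact lF_tau (by omega) (by omega)
        obtain ⟨i, hi, _, _, hφ⟩ := phi0_pos hlF
        have hij : j - 2 = i := tau_inj (congrArg Prod.fst (hψ.symm.trans hi))
        have heq : phi0 (psi0 v.1) = v.1 := by
          rw [hφ, ← hij, show j - 2 + 2 = j by ring, ← hvj]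
        exact congrArg ULift.up (congrArg (Quot.mk _) (Subtype.ext heq))
      · have hψ := psi0_neg hv
        have hnlF : ¬ lF (psi0 v.1) := by rw [hψ]; exact not_lF_false
        have hφ : phi0 (psi0 v.1) = (v.1.1, false) := by rw [phi0_neg hnlF, hψ]
        have e1 : Quot.mk (Rel lG glG (thicken S (2+2)))
              ⟨phi0 (psi0 v.1), phi_mem (psi_mem v.2)⟩ =
            Quot.mk _ ⟨(v.1.1, false), self_subset_thicken S (2+2) v.2⟩ :=
          congrArg _ (Subtype.ext hφ)
        have e2 : Quot.mk (Rel lG glG (thicken S (2+2)))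
              ⟨(v.1.1, false), self_subset_thicken S (2+2) v.2⟩ =
            Quot.mk _ ⟨v.1, self_subset_thicken S (2+2) v.2⟩ :=
          Quot.sound ⟨Or.inl (le_refl _), Or.inl (iff_of_false not_lG_false hv)⟩
        exact congrArg ULift.up (e1.trans e2)

lemma no_interleave_1 : ¬ IsInterleaving F G 1 := by
  rintro ⟨φ, ψ, -, -, htri, -⟩
  have hdc : downSet S0 = S0 := downSet_idem _
  have hφ : φ S0 xx = φ S0 zz :=
    (G_single_thicken1 (φ S0 xx)).trans (G_single_thicken1 (φ S0 zz)).symm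
  have h1 := htri S0 hdc xx
  have h2 := htri S0 hdc zz
  rw [← hφ] at h2
  have heq : F.map (self_subset_thicken S0 (1+1)) xx =
      F.map (self_subset_thicken S0 (1+1)) zz := h1.symm.trans h2
  have : F.map (self_subset_thicken T2 2) ix = F.map (self_subset_thicken T2 2) iz := by
    show F.map (self_subset_thicken T2 2) (F.map (self_subset_thicken S0 2) xx) =
        F.map (self_subset_thicken T2 2) (F.map (self_subset_thicken S0 2) zz)
    exact congrArg (F.map (self_subset_thicken T2 2)) heq
  exact neq_at_2 this

lemma no_interleave_0 : ¬ IsInterleaving F G 0 := by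
  rintro ⟨φ, ψ, -, -, htri, -⟩
  have hdc : downSet S0 = S0 := downSet_idem _
  have hφ : φ S0 xx = φ S0 zz := by
    have h1 := G_single_S0 (φ S0 xx)
    have h2 := G_single_S0 (φ S0 zz)
    exact h1.trans h2.symm
  have h1 := htri S0 hdc xx
  have h2 := htri S0 hdc zz
  rw [← hφ] at h2
  have heq : F.map (self_subset_thicken S0 (0+0)) xx =
      F.map (self_subset_thicken S0 (0+0)) zz := h1.symm.trans h2
  have hx : F.map (self_subset_thicken S0 (0+0)) xx = xx := F.map_id S0 xx
  have hz : F.map (self_subset_thicken S0 (0+0)) zz = zz := F.map_id S0 zz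
  exact x_ne_z ((hx.symm.trans heq).trans hz)

lemma dist_eq_2 : interleavingDist F G = 2 := by
  apply le_antisymm
  · apply sInf_le
    exact ⟨2, by norm_num, interleave2⟩
  · refine le_sInf ?_
    rintro b ⟨n, rfl, hn⟩
    match n, hn with
    | 0, hn => exact absurd hn no_interleave_0
    | 1, hn => exact absurd hn no_interleave_1
    | (m+2), hn =>
      have : (2:ℕ) ≤ m + 2 := by omega
      exact_mod_cast this
end MEx
/-- There is a pair of mapper cosheaves `F`, `G` (the example of the paper:
`F` has exactly two tails `x, z` at level `σ₁` whose images in the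
`2`-thickening are at distance `3`, and `G` has a single component `[y]` over
the `1`-thickening of that level) such that every `1`-assignment `(φ,ψ)` has
loss `L_B(φ,ψ) ≥ 2` — hence the bound `1 + L_B(φ,ψ) ≥ 3` — while the
interleaving distance is `d_I(F,G) = 2`: the optimal bound for `n = 1`
strictly exceeds the interleaving distance. -/
theorem exists_example_requiring_search :
    ∃ F G : MapperCosheaf (CoverPoset 1),
      (∃ x z : F.obj (downSet {sigC 1 1}), x ≠ z ∧ (∀ w, w = x ∨ w = z) ∧
        fdist F (thicken (downSet {sigC 1 1}) 2)
          (F.map (self_subset_thicken (downSet {sigC 1 1}) 2) x)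
          (F.map (self_subset_thicken (downSet {sigC 1 1}) 2) z) = 3) ∧
      (∃ y : G.obj (thicken (downSet {sigC 1 1}) 1), ∀ y', y' = y) ∧
      (∀ (φ : ∀ S : Set (CoverPoset 1), F.obj S → G.obj (thicken S 1))
         (ψ : ∀ S : Set (CoverPoset 1), G.obj S → F.obj (thicken S 1)),
        (2 : ℕ∞) ≤ assignmentLoss F G 1 φ ψ) ∧
      interleavingDist F G = 2 := by
  refine ⟨MEx.F, MEx.G, ⟨MEx.xx, MEx.zz, MEx.x_ne_z, MEx.classes_S0, MEx.fdist_xz⟩,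
    ⟨_, MEx.G_single_thicken1⟩, MEx.loss_ge, MEx.dist_eq_2⟩
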